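/- arXiv:2512.17884 — 3 statements merged into one kernel-verified Lean document; each statement's English description precedes it below -/
import Mathlib

section
/- Let d, m be positive integers, let κ > 0 and η ∈ (0,1), and let x₁,…,x_m ∈ ℝ^d satisfy ‖x_j − x_{j'}‖₂ ≥ κ for all j ≠ j'. Let ω be a random vector in ℝ^d whose characteristic function φ(t) = E[exp(i⟨ω, t⟩)] is real-valued, satisfies φ(t) ≥ 0 for all t, and satisfies φ(t) ≤ η/m for all t with ‖t‖₂ ≥ κ. For each realization of ω, define W ∈ ℂ^m by W_j = exp(i⟨ω, x_j⟩) and set Y = W W* − E[W W*] (expectation taken entrywise). Then almost surely ‖Y‖₂ ≤ m + η. -/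
open Matrix MeasureTheory
open scoped Matrix.Norms.L2Operator RealInnerProductSpace

/-- The `L2` operator norm is at most the Frobenius norm. -/
lemma l2_opNorm_le_of_sq_sum {m n : ℕ} (A : Matrix (Fin m) (Fin n) ℂ) (C : ℝ) (hC : 0 ≤ C)
    (h : ∑ j, ∑ k, ‖A j k‖ ^ 2 ≤ C ^ 2) : ‖A‖ ≤ C := by
  rw [Matrix.l2_opNorm_def]
  refine ContinuousLinearMap.opNorm_le_bound _ hC fun v => ?_
  show ‖Matrix.toEuclideanLin A v‖ ≤ C * ‖v‖
  have hvsq : ‖v‖ ^ 2 = ∑ k, ‖v k‖ ^ 2 := by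
    rw [EuclideanSpace.norm_eq, Real.sq_sqrt (Finset.sum_nonneg fun _ _ => sq_nonneg _)]
  have happ : ∀ j, (Matrix.toEuclideanLin A v) j = ∑ k, A j k * v k := fun j => rfl
  have key : ‖Matrix.toEuclideanLin A v‖ ^ 2 ≤ (C * ‖v‖) ^ 2 := by
    rw [EuclideanSpace.norm_eq, Real.sq_sqrt (Finset.sum_nonneg fun _ _ => sq_nonneg _)]
    calc ∑ j, ‖(Matrix.toEuclideanLin A v) j‖ ^ 2
        ≤ ∑ j : Fin m, (∑ k, ‖A j k‖ ^ 2) * ∑ k, ‖v k‖ ^ 2 := by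
          refine Finset.sum_le_sum fun j _ => ?_
          rw [happ j]
          calc ‖∑ k, A j k * v k‖ ^ 2 ≤ (∑ k, ‖A j k‖ * ‖v k‖) ^ 2 := by
                have h1 : ‖∑ k, A j k * v k‖ ≤ ∑ k, ‖A j k‖ * ‖v k‖ := by
                  refine (norm_sum_le _ _).trans ?_
                  exact le_of_eq (Finset.sum_congr rfl fun k _ => norm_mul _ _)
                exact pow_le_pow_left₀ (norm_nonneg _) h1 2
            _ ≤ (∑ k, ‖A j k‖ ^ 2) * ∑ k, ‖v k‖ ^ 2 :=
                Finset.sum_mul_sq_le_sq_mul_sq _ _ _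
      _ = (∑ j, ∑ k, ‖A j k‖ ^ 2) * ∑ k, ‖v k‖ ^ 2 := by rw [← Finset.sum_mul]
      _ ≤ C ^ 2 * ‖v‖ ^ 2 := by
          rw [← hvsq]
          exact mul_le_mul_of_nonneg_right h (by positivity)
      _ = (C * ‖v‖) ^ 2 := by ring
  nlinarith [norm_nonneg (Matrix.toEuclideanLin A v), mul_nonneg hC (norm_nonneg v)]

/-- Bound on the summands in the proof of the concentration theorem: for
`κ`-separated points `x₁, …, x_m` and a random vector `ω` whose characteristic
function `φ` is real-valued, nonnegative and satisfies `φ(t) ≤ η/m` for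
`‖t‖₂ ≥ κ`, the matrix `Y = W W* − E[W W*]` with `W_j = exp(i⟨ω, x_j⟩)`
satisfies `‖Y‖₂ ≤ m + η` almost surely. -/
theorem summand_norm_bound
    {d m : ℕ} (hd : 0 < d) (hm : 0 < m)
    {Ω : Type*} [MeasurableSpace Ω] (μ : Measure Ω) [IsProbabilityMeasure μ]
    (κ η : ℝ) (hκ : 0 < κ) (hη : η ∈ Set.Ioo (0 : ℝ) 1)
    (x : Fin m → EuclideanSpace ℝ (Fin d))
    (hsep : ∀ j j', j ≠ j' → κ ≤ ‖x j - x j'‖)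
    (ω : Ω → EuclideanSpace ℝ (Fin d)) (hmeas : Measurable ω)
    (φ : EuclideanSpace ℝ (Fin d) → ℝ)
    (hφ : ∀ t, ∫ ϖ, Complex.exp (Complex.I * (⟪ω ϖ, t⟫ : ℝ)) ∂μ = (φ t : ℂ))
    (hφ_nonneg : ∀ t, 0 ≤ φ t)
    (hφ_le : ∀ t, κ ≤ ‖t‖ → φ t ≤ η / m)
    (W : Ω → Fin m → ℂ)
    (hW : ∀ ϖ j, W ϖ j = Complex.exp (Complex.I * (⟪ω ϖ, x j⟫ : ℝ)))
    (M : Matrix (Fin m) (Fin m) ℂ)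
    (hM : ∀ j k, M j k = ∫ ϖ, W ϖ j * star (W ϖ k) ∂μ) :
    ∀ᵐ ϖ ∂μ, ‖vecMulVec (W ϖ) (star (W ϖ)) - M‖ ≤ m + η := by
  have hm1 : (1 : ℝ) ≤ m := by exact_mod_cast hm
  have hmne : (m : ℝ) ≠ 0 := by positivity
  have hη0 : 0 < η := hη.1
  have hWnorm : ∀ ϖ' j, ‖W ϖ' j‖ = 1 := by
    intro ϖ' j
    rw [hW, Complex.norm_exp]
    simp
  -- product of W_j with its own conjugate is 1
  have huni : ∀ ϖ' j, W ϖ' j * star (W ϖ' j) = 1 := by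
    intro ϖ' j
    have : (starRingEnd ℂ) (W ϖ' j) = star (W ϖ' j) := rfl
    rw [← this, Complex.mul_conj, Complex.normSq_eq_norm_sq, hWnorm]
    norm_num
  have hMdiag : ∀ j, M j j = 1 := by
    intro j
    rw [hM]
    have h1 : (fun ϖ' => W ϖ' j * star (W ϖ' j)) = fun _ : Ω => (1:ℂ) :=
      funext fun ϖ' => huni ϖ' j
    rw [h1, integral_const]
    simp
  have hMentry : ∀ j k, M j k = (φ (x j - x k) : ℂ) := by
    intro j k
    rw [hM, ← hφ (x j - x k)]
    refine integral_congr_ae (Filter.Eventually.of_forall fun ϖ' => ?_)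
    show W ϖ' j * star (W ϖ' k) = Complex.exp (Complex.I * (⟪ω ϖ', x j - x k⟫ : ℝ))
    rw [hW, hW]
    have hstar : star (Complex.exp (Complex.I * (⟪ω ϖ', x k⟫ : ℝ))) =
        Complex.exp (-(Complex.I * (⟪ω ϖ', x k⟫ : ℝ))) := by
      rw [show star (Complex.exp (Complex.I * (⟪ω ϖ', x k⟫ : ℝ))) =
        (starRingEnd ℂ) (Complex.exp (Complex.I * (⟪ω ϖ', x k⟫ : ℝ))) from rfl,
        ← Complex.exp_conj]
      congr 1
      simp [Complex.conj_I]
    rw [hstar, ← Complex.exp_add]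
    congr 1
    rw [inner_sub_right]
    push_cast
    ring
  refine Filter.Eventually.of_forall fun ϖ => ?_
  have hB : (0:ℝ) ≤ (m : ℝ) + η := by positivity
  refine l2_opNorm_le_of_sq_sum _ _ hB ?_
  set q : ℝ := (((m : ℝ) + η) / m) ^ 2 with hq
  have hq0 : 0 ≤ q := sq_nonneg _
  have hentry : ∀ j k, ‖(vecMulVec (W ϖ) (star (W ϖ)) - M) j k‖ ^ 2 ≤
      if j = k then 0 else q := by
    intro j k
    have hYjk : (vecMulVec (W ϖ) (star (W ϖ)) - M) j k = W ϖ j * star (W ϖ k) - M j k := by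
      simp [Matrix.sub_apply, Matrix.vecMulVec_apply]
    by_cases hjk : j = k
    · subst hjk
      rw [if_pos rfl, hYjk, huni, hMdiag, sub_self]
      simp
    · rw [if_neg hjk, hYjk]
      have h1 : ‖W ϖ j * star (W ϖ k)‖ = 1 := by
        rw [norm_mul, norm_star, hWnorm, hWnorm]; norm_num
      have h2 : ‖M j k‖ ≤ η / m := by
        rw [hMentry j k, Complex.norm_real, Real.norm_eq_abs, abs_of_nonneg (hφ_nonneg _)]
        exact hφ_le _ (hsep j k hjk)
      have h3 : ‖W ϖ j * star (W ϖ k) - M j k‖ ≤ ((m : ℝ) + η) / m := by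
        refine (norm_sub_le _ _).trans ?_
        rw [h1]
        have : ((m : ℝ) + η) / m = 1 + η / m := by field_simp
        rw [this]
        linarith
      rw [hq]
      exact pow_le_pow_left₀ (norm_nonneg _) h3 2
  calc ∑ j, ∑ k, ‖(vecMulVec (W ϖ) (star (W ϖ)) - M) j k‖ ^ 2
      ≤ ∑ j : Fin m, ∑ k : Fin m, (if j = k then 0 else q) := by
        exact Finset.sum_le_sum fun j _ => Finset.sum_le_sum fun k _ => hentry j k
    _ = ∑ j : Fin m, ((m : ℝ) * q - q) := by
        refine Finset.sum_congr rfl fun j _ => ?_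
        have : (∑ k : Fin m, if j = k then (0:ℝ) else q) =
            ∑ k : Fin m, (q - if j = k then q else 0) := by
          refine Finset.sum_congr rfl fun k _ => ?_
          by_cases h : j = k <;> simp [h]
        rw [this, Finset.sum_sub_distrib, Finset.sum_const, Finset.sum_ite_eq]
        simp [mul_comm]
    _ = (m : ℝ) * ((m : ℝ) * q - q) := by
        rw [Finset.sum_const, Finset.card_univ, Fintype.card_fin, nsmul_eq_mul]
    _ ≤ ((m : ℝ) + η) ^ 2 := by
        have hqid : (m : ℝ) ^ 2 * q = ((m : ℝ) + η) ^ 2 := by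
          rw [hq]; field_simp
        nlinarith [mul_nonneg (le_trans zero_le_one hm1) hq0]
end

section
/- Let d, m be positive integers, let κ > 0 and η ∈ (0,1), and let x₁,…,x_m ∈ ℝ^d satisfy ‖x_j − x_{j'}‖₂ ≥ κ for all j ≠ j'. Let ω be a random vector in ℝ^d whose characteristic function φ(t) = E[exp(i⟨ω, t⟩)] is real-valued, satisfies φ(t) ≥ 0 for all t, and satisfies φ(t) ≤ η/m for all t with ‖t‖₂ ≥ κ. Define W ∈ ℂ^m by W_j = exp(i⟨ω, x_j⟩). Then the matrix E[W W*] (expectation taken entrywise) satisfies ‖E[W W*]‖₂ ≤ 1 + η. -/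
open Matrix MeasureTheory
open scoped Matrix.Norms.L2Operator RealInnerProductSpace

set_option maxHeartbeats 1000000 in
open scoped Matrix.Norms.L2Operator in
/-- The `ℓ²` operator norm of a square matrix is at most `m` times a uniform bound on the
norms of its entries. -/
lemma l2_opNorm_le_of_entry_bound {m : ℕ} (A : Matrix (Fin m) (Fin m) ℂ) (c : ℝ)
    (hc : 0 ≤ c) (h : ∀ j k, ‖A j k‖ ≤ c) : ‖A‖ ≤ m * c := by
  rw [Matrix.l2_opNorm_def]
  apply ContinuousLinearMap.opNorm_le_bound _ (by positivity)
  intro x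
  have hxnn : (0:ℝ) ≤ ∑ k, ‖x k‖ ^ 2 := by positivity
  have hxeq : ‖x‖ = Real.sqrt (∑ k, ‖x k‖ ^ 2) := by
    rw [EuclideanSpace.norm_eq]
  -- Cauchy–Schwarz: (∑ ‖x k‖)² ≤ m * ∑ ‖x k‖²
  have hCS : (∑ k, ‖x k‖) ^ 2 ≤ (m : ℝ) * ∑ k, ‖x k‖ ^ 2 := by
    have := Finset.sum_mul_sq_le_sq_mul_sq Finset.univ (fun _ : Fin m => (1:ℝ))
      (fun k => ‖x k‖)
    simpa using this
  -- per-row bound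
  have hrow : ∀ j, ‖(A *ᵥ (WithLp.equiv 2 (Fin m → ℂ)) x) j‖ ^ 2
      ≤ c ^ 2 * ((m : ℝ) * ∑ k, ‖x k‖ ^ 2) := by
    intro j
    have h1 : ‖(A *ᵥ (WithLp.equiv 2 (Fin m → ℂ)) x) j‖ ≤ c * ∑ k, ‖x k‖ := by
      calc ‖∑ k, A j k * x k‖ ≤ ∑ k, ‖A j k * x k‖ := norm_sum_le _ _
        _ ≤ ∑ k, c * ‖x k‖ := by
            refine Finset.sum_le_sum fun k _ => ?_
            rw [norm_mul]
            exact mul_le_mul_of_nonneg_right (h j k) (norm_nonneg _)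
        _ = c * ∑ k, ‖x k‖ := by rw [Finset.mul_sum]
    have h2 : ‖(A *ᵥ (WithLp.equiv 2 (Fin m → ℂ)) x) j‖ ^ 2 ≤ (c * ∑ k, ‖x k‖) ^ 2 := by
      apply pow_le_pow_left₀ (norm_nonneg _) h1
    calc ‖(A *ᵥ (WithLp.equiv 2 (Fin m → ℂ)) x) j‖ ^ 2 ≤ (c * ∑ k, ‖x k‖) ^ 2 := h2
      _ = c ^ 2 * (∑ k, ‖x k‖) ^ 2 := by ring
      _ ≤ c ^ 2 * ((m : ℝ) * ∑ k, ‖x k‖ ^ 2) :=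
          mul_le_mul_of_nonneg_left hCS (by positivity)
  have hx2 : ‖x‖ ^ 2 = ∑ k, ‖x k‖ ^ 2 := by
    rw [hxeq, Real.sq_sqrt hxnn]
  have happ : ((toEuclideanLin ≪≫ₗ LinearMap.toContinuousLinearMap) A) x
      = (WithLp.equiv 2 (Fin m → ℂ)).symm (A *ᵥ (WithLp.equiv 2 (Fin m → ℂ)) x) := by
    simp only [LinearEquiv.trans_apply, LinearMap.coe_toContinuousLinearMap']
    exact Matrix.toEuclideanLin_apply A x
  have hnorm : ‖(WithLp.equiv 2 (Fin m → ℂ)).symm (A *ᵥ (WithLp.equiv 2 (Fin m → ℂ)) x)‖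
      = Real.sqrt (∑ j, ‖(A *ᵥ (WithLp.equiv 2 (Fin m → ℂ)) x) j‖ ^ 2) := by
    rw [EuclideanSpace.norm_eq]
    rfl
  rw [happ, hnorm, show (m : ℝ) * c * ‖x‖ = Real.sqrt (((m : ℝ) * c * ‖x‖) ^ 2) from
    (Real.sqrt_sq (by positivity)).symm]
  apply Real.sqrt_le_sqrt
  calc ∑ j, ‖(A *ᵥ (WithLp.equiv 2 (Fin m → ℂ)) x) j‖ ^ 2
      ≤ ∑ _j : Fin m, c ^ 2 * ((m : ℝ) * ∑ k, ‖x k‖ ^ 2) :=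
        Finset.sum_le_sum fun j _ => hrow j
    _ = (m : ℝ) * (c ^ 2 * ((m : ℝ) * ∑ k, ‖x k‖ ^ 2)) := by
        rw [Finset.sum_const, Finset.card_univ, Fintype.card_fin, nsmul_eq_mul]
    _ = ((m : ℝ) * c * ‖x‖) ^ 2 := by rw [← hx2]; ring

/-- Second-moment norm bound in the proof of the concentration theorem: for
`κ`-separated points `x₁, …, x_m` and a random vector `ω` whose characteristic
function `φ` is real-valued, nonnegative and satisfies `φ(t) ≤ η/m` for
`‖t‖₂ ≥ κ`, the entrywise expectation `E[W W*]` with `W_j = exp(i⟨ω, x_j⟩)`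
satisfies `‖E[W W*]‖₂ ≤ 1 + η`. -/
theorem second_moment_norm_bound
    {d m : ℕ} (hd : 0 < d) (hm : 0 < m)
    {Ω : Type*} [MeasurableSpace Ω] (μ : Measure Ω) [IsProbabilityMeasure μ]
    (κ η : ℝ) (hκ : 0 < κ) (hη : η ∈ Set.Ioo (0 : ℝ) 1)
    (x : Fin m → EuclideanSpace ℝ (Fin d))
    (hsep : ∀ j j', j ≠ j' → κ ≤ ‖x j - x j'‖)
    (ω : Ω → EuclideanSpace ℝ (Fin d)) (hmeas : Measurable ω)
    (φ : EuclideanSpace ℝ (Fin d) → ℝ)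
    (hφ : ∀ t, ∫ ϖ, Complex.exp (Complex.I * (⟪ω ϖ, t⟫ : ℝ)) ∂μ = (φ t : ℂ))
    (hφ_nonneg : ∀ t, 0 ≤ φ t)
    (hφ_le : ∀ t, κ ≤ ‖t‖ → φ t ≤ η / m)
    (W : Ω → Fin m → ℂ)
    (hW : ∀ ϖ j, W ϖ j = Complex.exp (Complex.I * (⟪ω ϖ, x j⟫ : ℝ)))
    (M : Matrix (Fin m) (Fin m) ℂ)
    (hM : ∀ j k, M j k = ∫ ϖ, W ϖ j * star (W ϖ k) ∂μ) :
    ‖M‖ ≤ 1 + η := by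
  have hmR : (0:ℝ) < m := Nat.cast_pos.mpr hm
  -- entries of M are values of φ
  have key : ∀ j k, M j k = (φ (x j - x k) : ℂ) := by
    intro j k
    rw [hM, ← hφ (x j - x k)]
    congr 1
    funext ϖ
    rw [hW, hW, Complex.star_def, ← Complex.exp_conj]
    rw [_root_.map_mul, Complex.conj_I, Complex.conj_ofReal, ← Complex.exp_add]
    congr 1
    rw [inner_sub_right]
    push_cast
    ring
  have hφ0 : (φ 0 : ℂ) = 1 := by
    have h := hφ 0
    simp only [inner_zero_right, Complex.ofReal_zero, mul_zero, Complex.exp_zero] at h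
    rw [integral_const, probReal_univ] at h
    simpa using h.symm
  have hdiag : ∀ j, M j j = 1 := by
    intro j
    rw [key, sub_self, hφ0]
  have hoff : ∀ j k, j ≠ k → ‖M j k‖ ≤ η / m := by
    intro j k hjk
    rw [key]
    rw [Complex.norm_real, Real.norm_eq_abs, abs_of_nonneg (hφ_nonneg _)]
    exact hφ_le _ (hsep j k hjk)
  -- decompose M = 1 + N
  set N : Matrix (Fin m) (Fin m) ℂ := M - 1 with hN
  haveI : Nonempty (Fin m) := ⟨⟨0, hm⟩⟩
  have hNent : ∀ j k, ‖N j k‖ ≤ η / m := by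
    intro j k
    by_cases hjk : j = k
    · subst hjk
      simp only [hN, Matrix.sub_apply, Matrix.one_apply_eq, hdiag, sub_self, norm_zero]
      exact div_nonneg hη.1.le hmR.le
    · simp only [hN, Matrix.sub_apply, Matrix.one_apply_ne hjk, sub_zero]
      exact hoff j k hjk
  have hNnorm : ‖N‖ ≤ η := by
    have := l2_opNorm_le_of_entry_bound N (η / m) (div_nonneg hη.1.le hmR.le) hNent
    calc ‖N‖ ≤ m * (η / m) := this
      _ = η := by field_simp
  have hMN : (1 : Matrix (Fin m) (Fin m) ℂ) + N = M := by rw [hN]; abel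
  calc ‖M‖ = ‖(1 : Matrix (Fin m) (Fin m) ℂ) + N‖ := by rw [hMN]
    _ ≤ ‖(1 : Matrix (Fin m) (Fin m) ℂ)‖ + ‖N‖ := norm_add_le _ _
    _ = 1 + ‖N‖ := by rw [norm_one]
    _ ≤ 1 + η := by linarith
end

section
/- Let d, m, N be positive integers, let κ > 0 and η ∈ (0,1), and let x₁,…,x_m ∈ ℝ^d satisfy ‖x_j − x_{j'}‖₂ ≥ κ for all j ≠ j'. Let ω₁,…,ω_N be identically distributed random vectors in ℝ^d whose common characteristic function φ(t) = E[exp(i⟨ω, t⟩)] is real-valued and satisfies 0 ≤ φ(t) ≤ η/m for all t with ‖t‖₂ ≥ κ. Let A be the associated random feature matrix. Then the deterministic matrix B = E[(1/N) A A*] − I_m (expectation taken entrywise) satisfies ‖B‖₂ ≤ η. -/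
open Matrix MeasureTheory
open scoped Matrix.Norms.L2Operator RealInnerProductSpace

lemma my_l2_opNorm_le_of_entries {n : ℕ} (A : Matrix (Fin n) (Fin n) ℂ) {c : ℝ}
    (hc : 0 ≤ c) (h : ∀ j k, ‖A j k‖ ≤ c) : ‖A‖ ≤ n * c := by
  rw [Matrix.l2_opNorm_def]
  refine ContinuousLinearMap.opNorm_le_bound _ (by positivity) fun v => ?_
  set y : EuclideanSpace ℂ (Fin n) := Matrix.toEuclideanLin A v with hy
  have hyj : ∀ j, ‖y j‖ ≤ c * ∑ k, ‖v k‖ := by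
    intro j
    have hcoord : y j = ∑ k, A j k * v k := by
      simp [hy, Matrix.toEuclideanLin_apply, Matrix.mulVec, dotProduct]
    rw [hcoord]
    calc ‖∑ k, A j k * v k‖ ≤ ∑ k, ‖A j k * v k‖ := norm_sum_le _ _
      _ ≤ ∑ k, c * ‖v k‖ := by
          refine Finset.sum_le_sum fun k _ => ?_
          rw [norm_mul]
          exact mul_le_mul_of_nonneg_right (h j k) (norm_nonneg _)
      _ = c * ∑ k, ‖v k‖ := by rw [Finset.mul_sum]
  have hsum : (∑ k, ‖v k‖) ^ 2 ≤ (n : ℝ) * ‖v‖ ^ 2 := by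
    have := sq_sum_le_card_mul_sum_sq (s := (Finset.univ : Finset (Fin n)))
      (f := fun k => ‖v k‖)
    have hv2 : ‖v‖ ^ 2 = ∑ k, ‖v k‖ ^ 2 := by
      rw [EuclideanSpace.norm_eq, Real.sq_sqrt (Finset.sum_nonneg fun j _ => sq_nonneg _)]
    rw [hv2]
    simpa using this
  have hyn : ‖y‖ ^ 2 ≤ ((n : ℝ) * c * ‖v‖) ^ 2 := by
    have h1 : ‖y‖ ^ 2 = ∑ j, ‖y j‖ ^ 2 := by
      rw [EuclideanSpace.norm_eq, Real.sq_sqrt (Finset.sum_nonneg fun j _ => sq_nonneg _)]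
    rw [h1]
    calc ∑ j, ‖y j‖ ^ 2 ≤ ∑ _j : Fin n, (c * ∑ k, ‖v k‖) ^ 2 := by
          refine Finset.sum_le_sum fun j _ => ?_
          exact pow_le_pow_left₀ (norm_nonneg _) (hyj j) 2
      _ = (n : ℝ) * (c ^ 2 * (∑ k, ‖v k‖) ^ 2) := by
          simp [Finset.sum_const, mul_pow, mul_assoc]
      _ ≤ (n : ℝ) * (c ^ 2 * ((n : ℝ) * ‖v‖ ^ 2)) := by
          refine mul_le_mul_of_nonneg_left (mul_le_mul_of_nonneg_left hsum (by positivity))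
            (by positivity)
      _ = ((n : ℝ) * c * ‖v‖) ^ 2 := by ring
  have hfin : ‖y‖ ≤ (n : ℝ) * c * ‖v‖ := by
    calc ‖y‖ = Real.sqrt (‖y‖ ^ 2) := (Real.sqrt_sq (norm_nonneg _)).symm
      _ ≤ Real.sqrt (((n : ℝ) * c * ‖v‖) ^ 2) := Real.sqrt_le_sqrt hyn
      _ = (n : ℝ) * c * ‖v‖ := Real.sqrt_sq (by positivity)
  exact hfin

/-- Bias bound in the proof of the concentration theorem: for `κ`-separated
points `x₁, …, x_m` and identically distributed random vectors `ω₁, …, ω_N`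
whose common characteristic function `φ` is real-valued and satisfies
`0 ≤ φ(t) ≤ η/m` for all `‖t‖₂ ≥ κ`, the deterministic matrix
`B = E[(1/N) A Aᴴ] − I_m` (expectation entrywise), where `A` is the random
feature matrix `A_{jk} = exp(i⟨ω_k, x_j⟩)`, satisfies `‖B‖₂ ≤ η`. -/
theorem bias_norm_bound
    {d m N : ℕ} (hd : 0 < d) (hm : 0 < m) (hN0 : 0 < N)
    {Ω : Type*} [MeasurableSpace Ω] (μ : Measure Ω) [IsProbabilityMeasure μ]
    (κ η : ℝ) (hκ : 0 < κ) (hη : η ∈ Set.Ioo (0 : ℝ) 1)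
    (x : Fin m → EuclideanSpace ℝ (Fin d))
    (hsep : ∀ j j', j ≠ j' → κ ≤ ‖x j - x j'‖)
    (ω : Fin N → Ω → EuclideanSpace ℝ (Fin d))
    (hmeas : ∀ k, Measurable (ω k))
    (φ : EuclideanSpace ℝ (Fin d) → ℝ)
    (hφ : ∀ k t, ∫ ϖ, Complex.exp (Complex.I * (⟪ω k ϖ, t⟫ : ℝ)) ∂μ = (φ t : ℂ))
    (hφ_bound : ∀ t, κ ≤ ‖t‖ → 0 ≤ φ t ∧ φ t ≤ η / m)
    (B : Matrix (Fin m) (Fin m) ℂ)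
    (hB : B = (Matrix.of fun j k =>
        ∫ ϖ, ((N : ℂ)⁻¹ •
          ((Matrix.of fun j' k' => Complex.exp (Complex.I * (⟪ω k' ϖ, x j'⟫ : ℝ))) *
            (Matrix.of fun j' k' =>
              Complex.exp (Complex.I * (⟪ω k' ϖ, x j'⟫ : ℝ)))ᴴ)) j k ∂μ) - 1) :
    ‖B‖ ≤ η := by
  -- integrability of the elementary integrands
  have hInt : ∀ (k' : Fin N) (t : EuclideanSpace ℝ (Fin d)),
      Integrable (fun ϖ => Complex.exp (Complex.I * (⟪ω k' ϖ, t⟫ : ℝ))) μ := by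
    intro k' t
    have hmeas' : Measurable fun ϖ => Complex.exp (Complex.I * (⟪ω k' ϖ, t⟫ : ℝ)) := by
      have h1 : Measurable fun ϖ => (⟪ω k' ϖ, t⟫ : ℝ) :=
        (hmeas k').inner measurable_const
      exact Complex.measurable_exp.comp
        ((measurable_const.mul (Complex.measurable_ofReal.comp h1)))
    refine (integrable_const (1 : ℝ)).mono' hmeas'.aestronglyMeasurable ?_
    filter_upwards with ϖ
    simp [Complex.norm_exp]
  -- entrywise formula for B
  have hentry : ∀ j k, B j k = ((φ (x j - x k) : ℂ)) - (if j = k then 1 else 0) := by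
    intro j k
    have hpoint : ∀ ϖ, ((N : ℂ)⁻¹ •
          ((Matrix.of fun j' k' => Complex.exp (Complex.I * (⟪ω k' ϖ, x j'⟫ : ℝ))) *
            (Matrix.of fun j' k' =>
              Complex.exp (Complex.I * (⟪ω k' ϖ, x j'⟫ : ℝ)))ᴴ)) j k
        = (N : ℂ)⁻¹ * ∑ k', Complex.exp (Complex.I * (⟪ω k' ϖ, x j - x k⟫ : ℝ)) := by
      intro ϖ
      simp only [Matrix.smul_apply, Matrix.mul_apply, Matrix.conjTranspose_apply,
        Matrix.of_apply, smul_eq_mul]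
      congr 1
      refine Finset.sum_congr rfl fun k' _ => ?_
      rw [Complex.star_def, ← Complex.exp_conj, ← Complex.exp_add]
      congr 1
      have h2 : (starRingEnd ℂ) (Complex.I * (⟪ω k' ϖ, x k⟫ : ℝ))
          = -Complex.I * (⟪ω k' ϖ, x k⟫ : ℝ) := by
        simp [Complex.conj_I]
      rw [h2, inner_sub_right]
      push_cast
      ring
    have : B j k = ∫ ϖ, (N : ℂ)⁻¹ *
        ∑ k', Complex.exp (Complex.I * (⟪ω k' ϖ, x j - x k⟫ : ℝ)) ∂μ
        - (if j = k then 1 else 0) := by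
      rw [hB]
      simp only [Matrix.sub_apply, Matrix.of_apply, Matrix.one_apply]
      rw [integral_congr_ae (Filter.Eventually.of_forall hpoint)]
    rw [this]
    congr 1
    rw [MeasureTheory.integral_const_mul, integral_finset_sum _ fun k' _ => hInt k' (x j - x k)]
    have : ∀ k' : Fin N, (∫ ϖ, Complex.exp (Complex.I * (⟪ω k' ϖ, x j - x k⟫ : ℝ)) ∂μ)
        = (φ (x j - x k) : ℂ) := fun k' => hφ k' _
    rw [Finset.sum_congr rfl fun k' _ => this k']
    simp [Finset.sum_const]
    rw [← mul_assoc, inv_mul_cancel₀ (by exact_mod_cast hN0.ne' : (N : ℂ) ≠ 0), one_mul]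
  -- φ 0 = 1
  have hφ0 : (φ 0 : ℂ) = 1 := by
    have := hφ ⟨0, hN0⟩ 0
    simpa using this.symm
  -- entrywise bound
  have hbound : ∀ j k, ‖B j k‖ ≤ η / m := by
    intro j k
    rcases eq_or_ne j k with rfl | hjk
    · rw [hentry]
      rw [if_pos rfl, show x j - x j = 0 from sub_self _, hφ0, sub_self, norm_zero]
      exact div_nonneg hη.1.le m.cast_nonneg
    · rw [hentry, if_neg hjk, sub_zero]
      have hsep' := hφ_bound (x j - x k) (hsep j k hjk)
      rw [Complex.norm_real, Real.norm_eq_abs, abs_of_nonneg hsep'.1]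
      exact hsep'.2
  have := my_l2_opNorm_le_of_entries B (div_nonneg hη.1.le m.cast_nonneg) hbound
  calc ‖B‖ ≤ m * (η / m) := this
    _ = η := by field_simp
end
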